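/- Let K and N be positive integers, f₀, x₀, λ ∈ ℝ, f(t) = f₀ + λ·t, and let x : ℕ → ℝ satisfy x(0) = x₀ and x(t+1) = (K·f(t) + N·x(t))/(K+N) for all t ∈ ℕ. Then for all t ∈ ℕ, f(t) − x(t) = (N/(K+N))^t·(f₀ − x₀) + (λ·(K+N)/K)·(1 − (N/(K+N))^t). -/

import Mathlib

theorem hk_gap_closed_formula
    (K N : ℕ) (hK : 0 < K) (hN : 0 < N)
    (f₀ x₀ l : ℝ) (f : ℕ → ℝ) (hf : ∀ t : ℕ, f t = f₀ + l * (t : ℝ))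
    (x : ℕ → ℝ) (hx0 : x 0 = x₀)
    (hx : ∀ t : ℕ, x (t + 1) = ((K : ℝ) * f t + (N : ℝ) * x t) / ((K : ℝ) + (N : ℝ))) :
    ∀ t : ℕ, f t - x t =
      ((N : ℝ) / ((K : ℝ) + (N : ℝ))) ^ t * (f₀ - x₀) +
        (l * ((K : ℝ) + (N : ℝ)) / (K : ℝ)) *
          (1 - ((N : ℝ) / ((K : ℝ) + (N : ℝ))) ^ t) := by
  have hKpos : (0:ℝ) < (K:ℝ) := by exact_mod_cast hK
  have hNpos : (0:ℝ) < (N:ℝ) := by exact_mod_cast hN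
  have hKN : (K:ℝ) + (N:ℝ) ≠ 0 := by positivity
  have hK0 : (K:ℝ) ≠ 0 := ne_of_gt hKpos
  intro t
  induction t with
  | zero => simp [hf, hx0]
  | succ n ih =>
    have h1 : f (n+1) - x (n+1) = ((N:ℝ)/((K:ℝ)+(N:ℝ))) * (f n - x n) + l := by
      rw [hx n, hf (n+1), hf n]
      push_cast
      field_simp
      ring
    rw [h1, ih]
    have key : (N:ℝ)/((K:ℝ)+(N:ℝ)) * (l * ((K:ℝ)+(N:ℝ)) / (K:ℝ)) + l = l * ((K:ℝ)+(N:ℝ)) / (K:ℝ) := by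
      field_simp
      ring
    rw [pow_succ]
    linear_combination key
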